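/- Let p ∈ (0,1) and λ > 0. If X and Y are independent random variables each exponentially distributed with rate λ, and ε_p is independent of (X, Y) with P(ε_p = 1) = p, P(ε_p = 0) = 1-p, then the random variable (1-p)·X + ε_p·Y is exponentially distributed with rate λ. -/

import Mathlib

open MeasureTheory ProbabilityTheory Real Set

lemma expM_eq (r : ℝ) : expMeasure r = volume.withDensity (exponentialPDF r) := rfl

lemma expM_Iic {r : ℝ} (hr : 0 < r) (x : ℝ) :
    expMeasure r (Iic x) = ENNReal.ofReal (if 0 ≤ x then 1 - rexp (-(r * x)) else 0) := by
  rw [expM_eq, withDensity_apply _ measurableSet_Iic,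
    lintegral_exponentialPDF_eq_antiDeriv hr]

lemma hasDerivAt_aux (c : ℝ) (x : ℝ) :
    HasDerivAt (fun y => rexp (c * y)) (c * rexp (c * x)) x := by
  simpa [mul_comm] using ((hasDerivAt_id x).const_mul c).exp

lemma expM_Iio_zero {r : ℝ} : expMeasure r (Iio 0) = 0 := by
  rw [expM_eq, withDensity_apply _ measurableSet_Iio]
  exact lintegral_exponentialPDF_of_nonpos le_rfl

lemma expPDFReal_eq (r x : ℝ) :
    exponentialPDFReal r x = if 0 ≤ x then r * rexp (-(r*x)) else 0 := by
  rw [exponentialPDFReal, gammaPDFReal]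
  simp only [rpow_one, Real.Gamma_one, div_one, sub_self, rpow_zero, mul_one]

lemma conv_cdf {r q t : ℝ} (hr : 0 < r) (hq : 0 < q) (hq1 : q < 1) (ht : 0 ≤ t) :
    ((expMeasure r).prod (expMeasure r)) {z : ℝ × ℝ | q * z.1 + z.2 ≤ t}
      = ENNReal.ofReal
        (1 - rexp (-(r * (t/q))) + (rexp (-(r*(t/q))) - rexp (-(r*t)))/(1-q)) := by
  haveI : IsProbabilityMeasure (expMeasure r) := isProbabilityMeasure_expMeasure hr
  set G : ℝ → ℝ := fun s => if 0 ≤ s then 1 - rexp (-(r * s)) else 0 with hG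
  have hGmeas : Measurable G := by
    apply Measurable.ite (measurableSet_le measurable_const measurable_id) <;> fun_prop
  have hS : MeasurableSet {z : ℝ × ℝ | q * z.1 + z.2 ≤ t} :=
    measurableSet_le (by fun_prop) measurable_const
  rw [Measure.prod_apply hS]
  have h1 : ∀ x : ℝ, expMeasure r (Prod.mk x ⁻¹' {z : ℝ × ℝ | q * z.1 + z.2 ≤ t})
      = ENNReal.ofReal (G (t - q * x)) := by
    intro x
    have : Prod.mk x ⁻¹' {z : ℝ × ℝ | q * z.1 + z.2 ≤ t} = Iic (t - q * x) := by
      ext y; simp [Iic]; constructor <;> intro h <;> linarith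
    rw [this, expM_Iic hr]
  simp_rw [h1]
  have hpdfmeas : Measurable (exponentialPDF r) :=
    (measurable_exponentialPDFReal r).ennreal_ofReal
  rw [expM_eq, lintegral_withDensity_eq_lintegral_mul _ hpdfmeas (by fun_prop)]
  set f : ℝ → ℝ := fun x => exponentialPDFReal r x * G (t - q * x) with hf
  have hfnn : ∀ x, 0 ≤ f x := by
    intro x
    apply mul_nonneg (exponentialPDFReal_nonneg hr x)
    rw [hG]; dsimp only; split_ifs with h
    · simp [exp_le_one_iff]; positivity
    · exact le_rfl
  have hstep : ∀ x : ℝ, exponentialPDF r x * ENNReal.ofReal (G (t - q * x))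
      = ENNReal.ofReal (f x) := by
    intro x
    rw [exponentialPDF, hf, ENNReal.ofReal_mul (exponentialPDFReal_nonneg hr x)]
  simp only [Pi.mul_apply]; simp_rw [hstep]
  set g : ℝ → ℝ := fun x => r * rexp (-(r*x)) * (1 - rexp (-(r*(t - q*x)))) with hg
  have hcg : Continuous g := by fun_prop
  have hae : f =ᵐ[volume] (Ioc 0 (t/q)).indicator g := by
    have h0 : ∀ᵐ x : ℝ, x ≠ 0 := by
      rw [ae_iff]; simpa using measure_singleton (0:ℝ)
    filter_upwards [h0] with x hx
    rcases lt_trichotomy x 0 with h|h|h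
    · rw [hf]; dsimp only
      rw [expPDFReal_eq, if_neg (not_le.mpr h), zero_mul,
        indicator_of_notMem (by simp [Ioc]; intro h'; exact absurd h' (not_lt.mpr h.le))]
    · exact absurd h hx
    · by_cases h2 : x ≤ t/q
      · rw [indicator_of_mem (mem_Ioc.mpr ⟨h, h2⟩), hf, hg]; dsimp only
        rw [expPDFReal_eq, if_pos h.le, hG]
        have : (0:ℝ) ≤ t - q * x := by
          have := (le_div_iff₀ hq).mp h2; linarith
        simp only [if_pos this]
      · rw [indicator_of_notMem (by simp [Ioc]; intro _; linarith), hf]; dsimp only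
        rw [hG]
        have : ¬ (0:ℝ) ≤ t - q * x := by
          push_neg at h2 ⊢
          have := (div_lt_iff₀ hq).mp h2; linarith
        simp only [if_neg this, mul_zero]
  have hgint : IntegrableOn g (Ioc 0 (t/q)) volume := hcg.integrableOn_Ioc
  have hind : Integrable ((Ioc 0 (t/q)).indicator g) volume :=
    hgint.integrable_indicator measurableSet_Ioc
  have hfint : Integrable f volume := hind.congr hae.symm
  rw [← MeasureTheory.ofReal_integral_eq_lintegral_ofReal hfint
    (Filter.Eventually.of_forall hfnn)]
  congr 1
  have htq : (0:ℝ) ≤ t / q := by positivity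
  rw [integral_congr_ae hae, integral_indicator measurableSet_Ioc,
    ← intervalIntegral.integral_of_le htq]
  have h1q : (0:ℝ) < 1 - q := by linarith
  set H : ℝ → ℝ := fun x => -rexp (-(r*x)) + rexp (-(r*t)) * rexp (-(r*(1-q)*x))/(1-q)
    with hH
  have hderiv : ∀ x ∈ uIcc (0:ℝ) (t/q), HasDerivAt H (g x) x := by
    intro x _
    have d1 : HasDerivAt (fun y => rexp (-(r*y))) (-r * rexp (-(r*x))) x := by
      have := hasDerivAt_aux (-r) x
      simpa [neg_mul] using this
    have d2 : HasDerivAt (fun y => rexp (-(r*(1-q)*y))) (-(r*(1-q)) * rexp (-(r*(1-q)*x))) x := by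
      have := hasDerivAt_aux (-(r*(1-q))) x
      simpa [neg_mul] using this
    have := (d1.neg).add ((d2.const_mul (rexp (-(r*t)))).div_const (1-q))
    convert this using 1
    any_goals rfl
    have hexp : rexp (-(r*x)) * rexp (-(r*(t - q*x))) = rexp (-(r*t)) * rexp (-(r*(1-q)*x)) := by
      rw [← Real.exp_add, ← Real.exp_add]; ring_nf
    rw [hg]
    dsimp only
    rw [mul_sub, mul_one, mul_assoc, hexp]
    field_simp
    ring
  rw [intervalIntegral.integral_eq_sub_of_hasDerivAt hderiv (hcg.intervalIntegrable _ _)]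
  have hexp2 : rexp (-(r*t)) * rexp (-(r*(1-q)*(t/q))) = rexp (-(r*(t/q))) := by
    rw [← Real.exp_add]; congr 1; field_simp; ring
  rw [hH]
  dsimp only
  simp only [mul_zero, neg_zero, Real.exp_zero, mul_one]
  rw [hexp2]
  field_simp
  ring

theorem stmt_18 {Ω : Type*} [MeasureSpace Ω] [IsProbabilityMeasure (ℙ : Measure Ω)]
    (p lam : ℝ) (hp : p ∈ Set.Ioo (0:ℝ) 1) (hlam : 0 < lam)
    (X Y ε : Ω → ℝ) (hX : Measurable X) (hY : Measurable Y) (hε : Measurable ε)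
    (hXlaw : Measure.map X ℙ = expMeasure lam)
    (hYlaw : Measure.map Y ℙ = expMeasure lam)
    (hXY : IndepFun X Y)
    (hεXY : IndepFun ε (fun ω => (X ω, Y ω)))
    (hε1 : ℙ {ω | ε ω = 1} = ENNReal.ofReal p)
    (hε0 : ℙ {ω | ε ω = 0} = ENNReal.ofReal (1 - p)) :
    Measure.map (fun ω => (1 - p) * X ω + ε ω * Y ω) ℙ = expMeasure lam := by
  obtain ⟨hp0, hp1⟩ := hp
  set q : ℝ := 1 - p with hqdef
  have hq : 0 < q := by simp [hqdef]; linarith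
  have hq1 : q < 1 := by simp [hqdef]; linarith
  haveI : IsProbabilityMeasure (expMeasure lam) := isProbabilityMeasure_expMeasure hlam
  set Z : Ω → ℝ := fun ω => q * X ω + ε ω * Y ω with hZdef
  have hZ : Measurable Z := (hX.const_mul q).add (hε.mul hY)
  set W : Ω → ℝ × ℝ := fun ω => (X ω, Y ω) with hWdef
  have hW : Measurable W := hX.prodMk hY
  have hmap : Measure.map W ℙ = (expMeasure lam).prod (expMeasure lam) := by
    rw [(indepFun_iff_map_prod_eq_prod_map_map hX.aemeasurable hY.aemeasurable).mp hXY,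
      hXlaw, hYlaw]
  haveI : IsProbabilityMeasure (Measure.map Z ℙ) :=
    Measure.isProbabilityMeasure_map hZ.aemeasurable
  refine Measure.ext_of_Iic _ _ (fun t => ?_)
  rw [Measure.map_apply hZ measurableSet_Iic, expM_Iic hlam]
  -- decomposition along ε = 0 / ε = 1
  have hA0eq : {ω | ε ω = 0} = ε ⁻¹' {0} := rfl
  have hA1eq : {ω | ε ω = 1} = ε ⁻¹' {1} := rfl
  have hA0 : MeasurableSet (ε ⁻¹' {0}) := hε (measurableSet_singleton 0)
  have hA1 : MeasurableSet (ε ⁻¹' {1}) := hε (measurableSet_singleton 1)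
  have hdisj : Disjoint (ε ⁻¹' ({0} : Set ℝ)) (ε ⁻¹' {1}) := by
    rw [Set.disjoint_left]
    rintro ω (h0 : ε ω = 0) (h1 : ε ω = 1)
    rw [h0] at h1; norm_num at h1
  have hcompl : ℙ ((ε ⁻¹' {0} ∪ ε ⁻¹' {1})ᶜ) = 0 := by
    have hU : ℙ (ε ⁻¹' {0} ∪ ε ⁻¹' {1}) = 1 := by
      rw [measure_union hdisj hA1, ← hA0eq, ← hA1eq, hε0, hε1,
        ← ENNReal.ofReal_add (by linarith) (by linarith),
        show q + p = 1 by rw [hqdef]; ring, ENNReal.ofReal_one]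
    rw [measure_compl (hA0.union hA1) (measure_ne_top _ _), hU, measure_univ, tsub_self]
  set B0 : Set (ℝ × ℝ) := {z : ℝ × ℝ | q * z.1 ≤ t} with hB0def
  set B1 : Set (ℝ × ℝ) := {z : ℝ × ℝ | q * z.1 + z.2 ≤ t} with hB1def
  have hB0 : MeasurableSet B0 := measurableSet_le (by fun_prop) measurable_const
  have hB1 : MeasurableSet B1 := measurableSet_le (by fun_prop) measurable_const
  have hsplit : ℙ (Z ⁻¹' Set.Iic t)
      = ℙ (ε ⁻¹' {0}) * ((expMeasure lam).prod (expMeasure lam)) B0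
        + ℙ (ε ⁻¹' {1}) * ((expMeasure lam).prod (expMeasure lam)) B1 := by
    rw [← measure_inter_conull hcompl, Set.inter_union_distrib_left,
      measure_union (hdisj.mono Set.inter_subset_right Set.inter_subset_right)
        ((hZ measurableSet_Iic).inter hA1)]
    have e0 : Z ⁻¹' Set.Iic t ∩ ε ⁻¹' {0} = ε ⁻¹' {0} ∩ W ⁻¹' B0 := by
      ext ω
      simp only [Set.mem_inter_iff, Set.mem_preimage, Set.mem_Iic, Set.mem_singleton_iff,
        hZdef, hB0def, hWdef, Set.mem_setOf_eq]
      constructor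
      · rintro ⟨h, h0⟩; rw [h0] at h; exact ⟨h0, by linarith⟩
      · rintro ⟨h0, h⟩; exact ⟨by rw [h0]; linarith, h0⟩
    have e1 : Z ⁻¹' Set.Iic t ∩ ε ⁻¹' {1} = ε ⁻¹' {1} ∩ W ⁻¹' B1 := by
      ext ω
      simp only [Set.mem_inter_iff, Set.mem_preimage, Set.mem_Iic, Set.mem_singleton_iff,
        hZdef, hB1def, hWdef, Set.mem_setOf_eq]
      constructor
      · rintro ⟨h, h0⟩; rw [h0] at h; exact ⟨h0, by linarith⟩
      · rintro ⟨h0, h⟩; exact ⟨by rw [h0]; linarith, h0⟩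
    have hWB : ∀ B : Set (ℝ × ℝ), MeasurableSet B →
        ℙ (W ⁻¹' B) = ((expMeasure lam).prod (expMeasure lam)) B := by
      intro B hB; rw [← hmap, Measure.map_apply hW hB]
    rw [e0, e1, hεXY.measure_inter_preimage_eq_mul _ _ (measurableSet_singleton 0) hB0,
      hεXY.measure_inter_preimage_eq_mul _ _ (measurableSet_singleton 1) hB1,
      hWB _ hB0, hWB _ hB1]
  rw [hsplit, ← hA0eq, ← hA1eq, hε0, hε1]
  have hB0val : ((expMeasure lam).prod (expMeasure lam)) B0
      = ENNReal.ofReal (if 0 ≤ t/q then 1 - rexp (-(lam * (t/q))) else 0) := by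
    have hB0eq : B0 = Set.Iic (t/q) ×ˢ Set.univ := by
      ext z
      simp only [hB0def, Set.mem_setOf_eq, Set.mem_prod, Set.mem_Iic, Set.mem_univ,
        and_true, ← le_div_iff₀' hq]
    rw [hB0eq, Measure.prod_prod, measure_univ, mul_one, expM_Iic hlam]
  by_cases ht : 0 ≤ t
  · rw [hB0val, if_pos (by positivity), conv_cdf hlam hq hq1 ht, if_pos ht]
    have h1q : (0:ℝ) < 1 - q := by rw [hqdef]; linarith
    set v := rexp (-(lam * (t/q))) with hv
    set u := rexp (-(lam * t)) with hu
    have hconv : u ≤ q * v + (1 - q) := by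
      have harg : q • (-(lam * (t / q))) + (1 - q) • (0:ℝ) = -(lam * t) := by
        rw [smul_eq_mul, smul_eq_mul]; field_simp; ring
      have := convexOn_exp.2 (Set.mem_univ (-(lam * (t/q)))) (Set.mem_univ (0:ℝ))
        hq.le (by linarith : (0:ℝ) ≤ 1 - q) (by ring)
      rw [harg] at this
      simpa [smul_eq_mul, Real.exp_zero, hv, hu] using this
    have hF1 : (0:ℝ) ≤ 1 - v := by
      rw [sub_nonneg, hv]
      exact Real.exp_le_one_iff.mpr (by rw [neg_nonpos]; positivity)
    have hE2 : (0:ℝ) ≤ 1 - v + (v - u)/(1-q) := by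
      have heq : 1 - v + (v - u)/(1-q) = ((1-q) + q*v - u)/(1-q) := by
        field_simp; ring
      rw [heq]
      exact div_nonneg (by linarith) h1q.le
    rw [← ENNReal.ofReal_mul hq.le, ← ENNReal.ofReal_mul hp0.le,
      ← ENNReal.ofReal_add (mul_nonneg hq.le hF1) (mul_nonneg hp0.le hE2)]
    congr 1
    rw [hqdef] at h1q ⊢
    field_simp
    ring
  · push_neg at ht
    rw [if_neg (not_le.mpr ht), ENNReal.ofReal_zero, hB0val,
      if_neg (not_le.mpr (by exact div_neg_of_neg_of_pos ht hq)), ENNReal.ofReal_zero]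
    have hB1val : ((expMeasure lam).prod (expMeasure lam)) B1 = 0 := by
      refine le_antisymm ?_ (zero_le)
      have hsub : B1 ⊆ (Set.Iio 0 ×ˢ Set.univ) ∪ (Set.univ ×ˢ Set.Iio 0) := by
        rintro ⟨z1, z2⟩ hz
        simp only [hB1def, Set.mem_setOf_eq] at hz
        by_contra hc
        simp only [Set.mem_union, Set.mem_prod, Set.mem_Iio, Set.mem_univ, and_true,
          true_and, not_or, not_lt] at hc
        obtain ⟨h1, h2⟩ := hc
        nlinarith [mul_nonneg hq.le h1]
      calc ((expMeasure lam).prod (expMeasure lam)) B1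
          ≤ ((expMeasure lam).prod (expMeasure lam))
            ((Set.Iio 0 ×ˢ Set.univ) ∪ (Set.univ ×ˢ Set.Iio 0)) := measure_mono hsub
        _ ≤ ((expMeasure lam).prod (expMeasure lam)) (Set.Iio 0 ×ˢ Set.univ)
            + ((expMeasure lam).prod (expMeasure lam)) (Set.univ ×ˢ Set.Iio 0) :=
            measure_union_le _ _
        _ = 0 := by
            simp [Measure.prod_prod, expM_Iio_zero]
    rw [hB1val, mul_zero, mul_zero, add_zero]
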